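/- Fix nodes u ∈ {0,...,n} of G and v ∈ {0,...,m} of H. Every valid partial matching q up to (u,v) satisfies at least one of the following: (1) q is a valid partial matching up to (anc_G(u), v); (2) q is a valid partial matching up to (u, anc_H(v)); (3) q is nonempty, its last pair equals (u,v), and the sequence obtained from q by deleting its last pair is a valid partial matching up to (anc_G(u), anc_H(v)). Here, if u = 0 then anc_G(u) is the virtual node −1 and a valid partial matching up to (−1, v) is by convention the empty matching only, and similarly for anc_H. -/

import Mathlib

/-- `a` is the parent of `b` (and `b` is not the root `0`). -/
def ChildRel {n : ℕ} (anc : Fin (n+1) → Fin (n+1)) (a b : Fin (n+1)) : Prop :=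
  b ≠ 0 ∧ anc b = a

/-- `u <_T v`: `u` is a proper ancestor of `v`. -/
def TreeLt {n : ℕ} (anc : Fin (n+1) → Fin (n+1)) : Fin (n+1) → Fin (n+1) → Prop :=
  Relation.TransGen (ChildRel anc)

/-- `u ≤_T v`: reflexive closure of the proper-ancestor relation. -/
def TreeLe {n : ℕ} (anc : Fin (n+1) → Fin (n+1)) : Fin (n+1) → Fin (n+1) → Prop :=
  Relation.ReflTransGen (ChildRel anc)

/-- A valid matching between the trees given by `ancG` and `ancH`. -/
def ValidMatching {n m : ℕ} (ancG : Fin (n+1) → Fin (n+1)) (ancH : Fin (m+1) → Fin (m+1))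
    (p : List (Fin (n+1) × Fin (m+1))) : Prop :=
  List.Chain' (fun x y => TreeLt ancG x.1 y.1 ∧ TreeLt ancH x.2 y.2) p

/-- A valid partial matching up to `(u, v)`. -/
def PartialUpTo {n m : ℕ} (ancG : Fin (n+1) → Fin (n+1)) (ancH : Fin (m+1) → Fin (m+1))
    (p : List (Fin (n+1) × Fin (m+1))) (u : Fin (n+1)) (v : Fin (m+1)) : Prop :=
  ValidMatching ancG ancH p ∧ ∀ q ∈ p.getLast?, TreeLe ancG q.1 u ∧ TreeLe ancH q.2 v

/-- A valid partial matching up to a pair of extended (possibly virtual `-1 = none`) nodes: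
the only valid partial matching up to a pair with a virtual coordinate is the empty matching. -/
def PartialUpToO {n m : ℕ} (ancG : Fin (n+1) → Fin (n+1)) (ancH : Fin (m+1) → Fin (m+1))
    (p : List (Fin (n+1) × Fin (m+1)))
    (u? : Option (Fin (n+1))) (v? : Option (Fin (m+1))) : Prop :=
  match u?, v? with
  | some u, some v => PartialUpTo ancG ancH p u v
  | _, _ => p = []

/-- Extended ancestor function: the parent of the root `0` is the virtual node `none` (i.e. `-1`). -/
def ancO {n : ℕ} (anc : Fin (n+1) → Fin (n+1)) (u : Fin (n+1)) : Option (Fin (n+1)) :=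
  if u = 0 then none else some (anc u)

/-- The score of a matching. -/
def score {n m : ℕ} {S : Type*} (w : S → S → ℝ)
    (φG : Fin (n+1) → S) (φH : Fin (m+1) → S)
    (p : List (Fin (n+1) × Fin (m+1))) : ℝ :=
  (p.map (fun q => w (φG q.1) (φH q.2))).sum

lemma treeLt_le_anc {k : ℕ} (anc : Fin (k+1) → Fin (k+1)) {a u : Fin (k+1)}
    (h : TreeLt anc a u) : u ≠ 0 ∧ TreeLe anc a (anc u) := by
  rcases Relation.TransGen.tail'_iff.1 h with ⟨c, hac, hu0, hanc⟩
  exact ⟨hu0, by rw [hanc]; exact hac⟩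

/-- Every valid partial matching `q` up to `(u, v)` is (1) a valid partial
matching up to `(anc_G u, v)`, or (2) a valid partial matching up to `(u, anc_H v)`, or
(3) nonempty with last pair `(u, v)`, where deleting the last pair gives a valid partial
matching up to `(anc_G u, anc_H v)`.  Virtual coordinates (the parent `-1 = none` of a root)
admit only the empty matching. -/
theorem partial_matching_trichotomy
    (n m : ℕ) (ancG : Fin (n+1) → Fin (n+1)) (ancH : Fin (m+1) → Fin (m+1))
    (hG : ∀ v : Fin (n+1), v ≠ 0 → ancG v < v)
    (hH : ∀ v : Fin (m+1), v ≠ 0 → ancH v < v)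
    (u : Fin (n+1)) (v : Fin (m+1))
    (q : List (Fin (n+1) × Fin (m+1)))
    (hq : PartialUpTo ancG ancH q u v) :
    PartialUpToO ancG ancH q (ancO ancG u) (some v) ∨
    PartialUpToO ancG ancH q (some u) (ancO ancH v) ∨
    (q ≠ [] ∧ q.getLast? = some (u, v) ∧
      PartialUpToO ancG ancH q.dropLast (ancO ancG u) (ancO ancH v)) := by
  obtain ⟨hvm, hlast⟩ := hq
  rcases eq_or_ne q [] with rfl | hne
  · left
    by_cases hu : u = 0
    · simp [ancO, hu, PartialUpToO]
    · simp [ancO, hu, PartialUpToO, PartialUpTo, ValidMatching]; exact List.isChain_nil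
  · have hL : q.getLast? = some (q.getLast hne) := List.getLast?_eq_getLast hne
    obtain ⟨ha, hb⟩ := hlast (q.getLast hne) (by simp [hL])
    rcases Relation.reflTransGen_iff_eq_or_transGen.1 ha with hau | hau
    · rcases Relation.reflTransGen_iff_eq_or_transGen.1 hb with hbv | hbv
      · -- last pair is (u, v)
        right; right
        have hql : q.getLast? = some (u, v) := by
          rw [hL, hau, hbv]
        refine ⟨hne, hql, ?_⟩
        have hsplit : q.dropLast ++ [q.getLast hne] = q := List.dropLast_append_getLast hne
        have hvm' : ValidMatching ancG ancH q.dropLast := by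
          have := hvm
          rw [← hsplit] at this
          exact (List.isChain_append.1 this).1
        have hrel : ∀ p ∈ q.dropLast.getLast?,
            TreeLt ancG p.1 u ∧ TreeLt ancH p.2 v := by
          intro p hp
          have := hvm
          rw [← hsplit] at this
          have h3 := (List.isChain_append.1 this).2.2 p hp (q.getLast hne) (by simp)
          rw [hau, hbv]
          exact h3
        rcases eq_or_ne q.dropLast [] with hdl | hdl
        · unfold PartialUpToO
          rcases ancO ancG u with _ | u' <;> rcases ancO ancH v with _ | v' <;>
            try exact hdl
          exact ⟨by rw [hdl]; exact List.isChain_nil, by rw [hdl]; simp⟩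
        · have hL' : q.dropLast.getLast? = some (q.dropLast.getLast hdl) :=
            List.getLast?_eq_getLast hdl
          obtain ⟨hc, hd⟩ := hrel (q.dropLast.getLast hdl) (by simp [hL'])
          obtain ⟨hu0, hcle⟩ := treeLt_le_anc ancG hc
          obtain ⟨hv0, hdle⟩ := treeLt_le_anc ancH hd
          have : ancO ancG u = some (ancG u) := by simp [ancO, hu0]
          have h2 : ancO ancH v = some (ancH v) := by simp [ancO, hv0]
          rw [this, h2]
          refine ⟨hvm', ?_⟩
          intro p hp
          rw [hL'] at hp
          simp at hp
          rw [← hp]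
          exact ⟨hcle, hdle⟩
      · -- b <_H v
        right; left
        obtain ⟨hv0, hble⟩ := treeLt_le_anc ancH hbv
        have : ancO ancH v = some (ancH v) := by simp [ancO, hv0]
        rw [this]
        refine ⟨hvm, ?_⟩
        intro p hp
        rw [hL] at hp; simp at hp; rw [← hp]
        exact ⟨ha, hble⟩
    · -- a <_G u
      left
      obtain ⟨hu0, hale⟩ := treeLt_le_anc ancG hau
      have : ancO ancG u = some (ancG u) := by simp [ancO, hu0]
      rw [this]
      refine ⟨hvm, ?_⟩
      intro p hp
      rw [hL] at hp; simp at hp; rw [← hp]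
      exact ⟨hale, hb⟩
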